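/- Let δ > 0 and L > 0 be real numbers. There exists a real number β with 1 < β < e^{δL} (one may take β = e^{δL/4}), depending only on δ and L, with the following property: for all sequences a, λ : ℕ → ℝ such that for every k either λ_k = 0 or |λ_k| ≥ δ, and such that the series Σ_k a_k² and Σ_k a_k² · exp(−2·λ_k·(3L)) both converge, setting N(t) = (Σ_k a_k² · exp(−2·λ_k·t))^{1/2} for t ∈ [0, 3L], the following implication holds: if sup_{t ∈ [L, 2L]} N(t) ≥ β · sup_{t ∈ [0, L]} N(t), then sup_{t ∈ [2L, 3L]} N(t) ≥ β · sup_{t ∈ [L, 2L]} N(t). -/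

import Mathlib

/-- The `L²`-norm at time `t` of a solution `F(t) = Σ_k a_k e^{-λ_k t} φ_k`
of the linear parabolic equation, expanded in an orthonormal eigenbasis
with eigenvalues `λ_k`. -/
noncomputable def specNorm (a lam : ℕ → ℝ) (t : ℝ) : ℝ :=
  Real.sqrt (∑' k, a k ^ 2 * Real.exp (-2 * lam k * t))

private lemma exp_endpoint_bound (c t T : ℝ) (h0 : 0 ≤ t) (hT : t ≤ T) :
    Real.exp (c * t) ≤ Real.exp (c * 0) + Real.exp (c * T) := by
  rcases le_total c 0 with hc | hc
  · have : c * t ≤ c * 0 := by nlinarith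
    have h1 : Real.exp (c * t) ≤ Real.exp (c * 0) := Real.exp_le_exp.2 this
    have h2 : 0 < Real.exp (c * T) := Real.exp_pos _
    linarith
  · have : c * t ≤ c * T := by nlinarith
    have h1 : Real.exp (c * t) ≤ Real.exp (c * T) := Real.exp_le_exp.2 this
    have h2 : 0 < Real.exp (c * 0) := Real.exp_pos _
    linarith

/-- Growth-propagation implication of the lemma `lemma_beta`: there is
`β` with `1 < β < e^{δL}` (one may take `β = e^{δL/4}`) such that for every
solution whose nonzero eigenvalues satisfy `|λ_k| ≥ δ`, if the `L²`-norm grows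
by a factor `β` from `[0,L]` to `[L,2L]`, then it grows by a factor `β` from
`[L,2L]` to `[2L,3L]`. -/
theorem growth_propagates
    (δ L : ℝ) (hδ : 0 < δ) (hL : 0 < L) :
    ∃ β : ℝ, 1 < β ∧ β < Real.exp (δ * L) ∧
      ∀ a lam : ℕ → ℝ,
        (∀ k, lam k = 0 ∨ δ ≤ |lam k|) →
        (Summable fun k => a k ^ 2) →
        (Summable fun k => a k ^ 2 * Real.exp (-2 * lam k * (3 * L))) →
        (β * sSup (specNorm a lam '' Set.Icc 0 L)
            ≤ sSup (specNorm a lam '' Set.Icc L (2 * L)) →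
          β * sSup (specNorm a lam '' Set.Icc L (2 * L))
            ≤ sSup (specNorm a lam '' Set.Icc (2 * L) (3 * L))) := by
  have hδL : 0 < δ * L := mul_pos hδ hL
  refine ⟨Real.exp (δ * L / 4), Real.one_lt_exp_iff.2 (by linarith),
    Real.exp_lt_exp.2 (by linarith), ?_⟩
  set β := Real.exp (δ * L / 4) with hβdef
  have hβ1 : 1 < β := Real.one_lt_exp_iff.2 (by linarith)
  intro a lam _ hsum0 hsum3
  set f : ℕ → ℝ → ℝ := fun k t => a k ^ 2 * Real.exp (-2 * lam k * t) with hfdef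
  have hnn : ∀ k t, 0 ≤ f k t := fun k t => by positivity
  have hsum0' : Summable (fun k => f k 0) := by
    simp only [hfdef, mul_zero, Real.exp_zero, mul_one]
    exact hsum0
  have hsumsum : Summable (fun k => f k 0 + f k (3 * L)) := hsum0'.add hsum3
  have hbound : ∀ t, 0 ≤ t → t ≤ 3 * L → ∀ k, f k t ≤ f k 0 + f k (3 * L) := by
    intro t h0 h3 k
    have := exp_endpoint_bound (-2 * lam k) t (3 * L) h0 h3
    have ha := sq_nonneg (a k)
    simp only [hfdef]
    nlinarith
  have hsummable : ∀ t, 0 ≤ t → t ≤ 3 * L → Summable (fun k => f k t) := by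
    intro t h0 h3
    exact Summable.of_nonneg_of_le (fun k => hnn k t) (hbound t h0 h3) hsumsum
  set h : ℝ → ℝ := fun t => ∑' k, f k t with hhdef
  have hhnn : ∀ t, 0 ≤ h t := fun t => tsum_nonneg (fun k => hnn k t)
  have hN : ∀ t, specNorm a lam t = Real.sqrt (h t) := fun t => rfl
  set N : ℝ → ℝ := specNorm a lam with hNdef
  have hNnn : ∀ t, 0 ≤ N t := fun t => (hN t) ▸ Real.sqrt_nonneg _
  -- convexity of h
  have hconv : ∀ s t θ η : ℝ, 0 ≤ s → s ≤ 3 * L → 0 ≤ t → t ≤ 3 * L →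
      0 ≤ θ → 0 ≤ η → θ + η = 1 → h (θ * s + η * t) ≤ θ * h s + η * h t := by
    intro s t θ η hs0 hs3 ht0 ht3 hθ hη hθη
    have hst0 : 0 ≤ θ * s + η * t := by positivity
    have hst3 : θ * s + η * t ≤ 3 * L := by nlinarith
    have hle : ∀ k, f k (θ * s + η * t) ≤ θ * f k s + η * f k t := by
      intro k
      have hx := convexOn_exp.2 (Set.mem_univ (-2 * lam k * s)) (Set.mem_univ (-2 * lam k * t))
        hθ hη hθη
      simp only [smul_eq_mul] at hx
      have harg : -2 * lam k * (θ * s + η * t) = θ * (-2 * lam k * s) + η * (-2 * lam k * t) := by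
        ring
      simp only [hfdef]
      rw [harg]
      calc a k ^ 2 * Real.exp (θ * (-2 * lam k * s) + η * (-2 * lam k * t))
          ≤ a k ^ 2 * (θ * Real.exp (-2 * lam k * s) + η * Real.exp (-2 * lam k * t)) :=
            mul_le_mul_of_nonneg_left hx (sq_nonneg _)
        _ = θ * (a k ^ 2 * Real.exp (-2 * lam k * s)) + η * (a k ^ 2 * Real.exp (-2 * lam k * t)) := by
            ring
    have hsR : Summable (fun k => θ * f k s + η * f k t) :=
      ((hsummable s hs0 hs3).mul_left θ).add ((hsummable t ht0 ht3).mul_left η)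
    calc h (θ * s + η * t) = ∑' k, f k (θ * s + η * t) := rfl
      _ ≤ ∑' k, (θ * f k s + η * f k t) :=
          Summable.tsum_le_tsum hle (hsummable _ hst0 hst3) hsR
      _ = θ * h s + η * h t := by
          rw [Summable.tsum_add ((hsummable s hs0 hs3).mul_left θ) ((hsummable t ht0 ht3).mul_left η),
            tsum_mul_left, tsum_mul_left]
  -- sup over a subinterval is the max of the endpoint values
  have hkey : ∀ p q : ℝ, 0 ≤ p → p < q → q ≤ 3 * L →
      sSup (N '' Set.Icc p q) = max (N p) (N q) := by
    intro p q hp hpq hq3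
    have hub : ∀ x ∈ N '' Set.Icc p q, x ≤ max (N p) (N q) := by
      rintro x ⟨t, ⟨htp, htq⟩, rfl⟩
      have hqp : 0 < q - p := by linarith
      obtain ⟨θ, η, hθ, hη, hθη, hteq⟩ :
          ∃ θ η : ℝ, 0 ≤ θ ∧ 0 ≤ η ∧ θ + η = 1 ∧ t = θ * p + η * q := by
        refine ⟨(q - t) / (q - p), (t - p) / (q - p),
          div_nonneg (by linarith) hqp.le, div_nonneg (by linarith) hqp.le, ?_, ?_⟩
        · field_simp
          ring
        · field_simp
          ring
      have hh : h t ≤ θ * h p + η * h q := by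
        rw [hteq]
        exact hconv p q θ η hp (by linarith) (by linarith) hq3 hθ hη hθη
      have hηeq : η = 1 - θ := by linarith
      rw [hηeq] at hh
      rw [hN t]
      rcases le_total (h p) (h q) with hc | hc
      · have : h t ≤ h q := by nlinarith [mul_nonneg hθ (sub_nonneg.2 hc)]
        exact le_trans (Real.sqrt_le_sqrt this) (by rw [← hN q]; exact le_max_right _ _)
      · have : h t ≤ h p := by nlinarith [mul_nonneg hη (sub_nonneg.2 hc)]
        exact le_trans (Real.sqrt_le_sqrt this) (by rw [← hN p]; exact le_max_left _ _)
    have hbdd : BddAbove (N '' Set.Icc p q) := ⟨max (N p) (N q), hub⟩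
    apply le_antisymm
    · apply csSup_le ((Set.nonempty_Icc.2 hpq.le).image N) hub
    · apply max_le
      · exact le_csSup hbdd ⟨p, ⟨le_refl p, hpq.le⟩, rfl⟩
      · exact le_csSup hbdd ⟨q, ⟨hpq.le, le_refl q⟩, rfl⟩
  -- Cauchy-Schwarz: h(2L) ≤ N(L) * N(3L)
  have hCS : h (2 * L) ≤ N L * N (3 * L) := by
    have hterm : ∀ k, f k (2 * L) = Real.sqrt (f k L) * Real.sqrt (f k (3 * L)) := by
      intro k
      rw [← Real.sqrt_mul (hnn k L)]
      have : f k L * f k (3 * L) = (f k (2 * L)) ^ 2 := by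
        have e1 : Real.exp (-2 * lam k * L) * Real.exp (-2 * lam k * (3 * L))
            = Real.exp (-2 * lam k * (2 * L)) * Real.exp (-2 * lam k * (2 * L)) := by
          rw [← Real.exp_add, ← Real.exp_add]
          ring_nf
        simp only [hfdef]
        linear_combination (a k ^ 2 * a k ^ 2) * e1
      rw [this, Real.sqrt_sq (hnn k (2 * L))]
    have hsL : Summable (fun k => f k L) := hsummable L hL.le (by linarith)
    have hs3L : Summable (fun k => f k (3 * L)) := hsummable (3 * L) (by linarith) le_rfl
    have hs2L : Summable (fun k => f k (2 * L)) := hsummable (2 * L) (by linarith) (by linarith)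
    calc h (2 * L) = ∑' k, f k (2 * L) := rfl
      _ ≤ Real.sqrt (h L) * Real.sqrt (h (3 * L)) := by
          apply Summable.tsum_le_of_sum_le hs2L
          intro s
          calc ∑ k ∈ s, f k (2 * L)
              = ∑ k ∈ s, Real.sqrt (f k L) * Real.sqrt (f k (3 * L)) := by
                exact Finset.sum_congr rfl (fun k _ => hterm k)
            _ ≤ Real.sqrt (∑ k ∈ s, f k L) * Real.sqrt (∑ k ∈ s, f k (3 * L)) :=
                Real.sum_sqrt_mul_sqrt_le s (fun k => hnn k L) (fun k => hnn k (3 * L))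
            _ ≤ Real.sqrt (h L) * Real.sqrt (h (3 * L)) := by
                apply mul_le_mul
                · exact Real.sqrt_le_sqrt (Summable.sum_le_tsum s (fun k _ => hnn k L) hsL)
                · exact Real.sqrt_le_sqrt (Summable.sum_le_tsum s (fun k _ => hnn k (3 * L)) hs3L)
                · exact Real.sqrt_nonneg _
                · exact Real.sqrt_nonneg _
      _ = N L * N (3 * L) := by rw [hN L, hN (3 * L)]
  -- main argument
  intro hyp
  rw [hkey 0 L le_rfl hL (by linarith), hkey L (2 * L) hL.le (by linarith) (by linarith)] at hyp
  rw [hkey L (2 * L) hL.le (by linarith) (by linarith),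
    hkey (2 * L) (3 * L) (by linarith) (by linarith) le_rfl]
  have hβ0 : 0 < β := by linarith
  -- Step 1 : β * N L ≤ N (2L)
  have step1 : β * N L ≤ N (2 * L) := by
    have h1 : β * N L ≤ max (N L) (N (2 * L)) :=
      le_trans (mul_le_mul_of_nonneg_left (le_max_right _ _) hβ0.le) hyp
    rcases le_max_iff.1 h1 with h2 | h2
    · -- β N L ≤ N L forces N L = 0
      have hz : (β - 1) * N L = 0 := by
        have hge : 0 ≤ (β - 1) * N L := mul_nonneg (by linarith) (hNnn L)
        nlinarith
      rcases mul_eq_zero.1 hz with hz' | hz'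
      · linarith
      · rw [hz', mul_zero]; exact hNnn (2 * L)
    · exact h2
  have hL2L : N L ≤ N (2 * L) := le_trans (le_mul_of_one_le_left (hNnn L) hβ1.le) step1
  rw [max_eq_right hL2L]
  -- Step 2 : β * N (2L) ≤ N (3L)
  have hsq : N (2 * L) ^ 2 ≤ N L * N (3 * L) := by
    rw [hN (2 * L), Real.sq_sqrt (hhnn (2 * L))]
    exact hCS
  have step2 : β * N (2 * L) ≤ N (3 * L) := by
    rcases eq_or_lt_of_le (hNnn (2 * L)) with h0 | h0
    · rw [← h0, mul_zero]; exact hNnn (3 * L)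
    · have k1 : β * N (2 * L) ^ 2 ≤ β * (N L * N (3 * L)) :=
        mul_le_mul_of_nonneg_left hsq hβ0.le
      have k2 : β * N L * N (3 * L) ≤ N (2 * L) * N (3 * L) :=
        mul_le_mul_of_nonneg_right step1 (hNnn (3 * L))
      have k3 : β * N (2 * L) * N (2 * L) ≤ N (3 * L) * N (2 * L) := by nlinarith
      exact le_of_mul_le_mul_right k3 h0
  exact le_trans step2 (le_max_right _ _)
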